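/- Let n be a positive integer, let u = (u_i)_{0 ≤ i ≤ n−1} and l = (l_i)_{0 ≤ i ≤ n−1} be complex coefficient sequences (extended by zero), and define a = (a_k)_{−n+1 ≤ k ≤ n−1} by a_k = ∑_i u_i l_{i−k} (i.e., a(z) = u(z)·l(1/z) is a finite Wiener–Hopf-type factorization). Then the following identity of n×n complex matrices holds: T_{n,n}(a) = T_{n,n}(u) · T_{n,n}(l)ᵀ + J_n · H_{n,n}(u) · H_{n,n}(l) · J_n. -/

import Mathlib

open Matrix

/-- If `u = (u_i)_{0 ≤ i ≤ n-1}` and `l = (l_i)_{0 ≤ i ≤ n-1}` are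
complex coefficient sequences (extended by zero) and `a_k = ∑_{i-j=k} u_i l_j` (the finite
Wiener–Hopf-type factorization `a(z) = u(z) l(1/z)`), then
`T_{n,n}(a) = T_{n,n}(u) T_{n,n}(l)ᵀ + J_n H_{n,n}(u) H_{n,n}(l) J_n`,
where `T_{n,n}(x)_{i,j} = x_{j-i}`, `H_{n,n}(f)_{i,j} = f_{i+j-1}` (1-based indices),
and `J_n` is the `n × n` flip matrix. -/
theorem finite_wiener_hopf_factorization
    (n : ℕ) (hn : 0 < n) (u l : ℕ → ℂ)
    (hu : ∀ i : ℕ, n ≤ i → u i = 0) (hl : ∀ i : ℕ, n ≤ i → l i = 0)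
    (a : ℤ → ℂ)
    (ha : ∀ k : ℤ, a k = ∑' q : ℕ × ℕ,
      if (q.1 : ℤ) - (q.2 : ℤ) = k then u q.1 * l q.2 else 0) :
    (Matrix.of fun (i j : Fin n) => a ((j : ℤ) - (i : ℤ))) =
      (Matrix.of fun (i j : Fin n) =>
          if (i : ℕ) ≤ (j : ℕ) then u ((j : ℕ) - (i : ℕ)) else 0) *
        (Matrix.of fun (i j : Fin n) =>
          if (i : ℕ) ≤ (j : ℕ) then l ((j : ℕ) - (i : ℕ)) else 0)ᵀ +
      (Matrix.of fun (i j : Fin n) =>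
          if (i : ℕ) + (j : ℕ) = n - 1 then (1 : ℂ) else 0) *
        (Matrix.of fun (i j : Fin n) => u ((i : ℕ) + (j : ℕ) + 1)) *
        (Matrix.of fun (i j : Fin n) => l ((i : ℕ) + (j : ℕ) + 1)) *
        (Matrix.of fun (i j : Fin n) =>
          if (i : ℕ) + (j : ℕ) = n - 1 then (1 : ℂ) else 0) := by
  -- J * M flips rows
  have hJl : ∀ (M : Matrix (Fin n) (Fin n) ℂ),
      (Matrix.of fun (i j : Fin n) => if (i : ℕ) + (j : ℕ) = n - 1 then (1 : ℂ) else 0) * M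
        = Matrix.of fun i j => M i.rev j := by
    intro M
    ext i j
    rw [Matrix.mul_apply]
    rw [Finset.sum_eq_single i.rev]
    · have h : (i : ℕ) + (i.rev : ℕ) = n - 1 := by
        have h1 := i.isLt
        have h2 := Fin.val_rev i
        omega
      simp only [Matrix.of_apply]
      rw [if_pos h, one_mul]
    · intro k _ hk
      have h : ¬ ((i : ℕ) + (k : ℕ) = n - 1) := by
        intro h
        apply hk
        apply Fin.ext
        have h1 := i.isLt
        have h2 := k.isLt
        have h3 := Fin.val_rev i
        omega
      simp only [Matrix.of_apply]
      rw [if_neg h, zero_mul]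
    · intro h
      exact absurd (Finset.mem_univ _) h
  -- M * J flips columns
  have hJr : ∀ (M : Matrix (Fin n) (Fin n) ℂ),
      M * (Matrix.of fun (i j : Fin n) => if (i : ℕ) + (j : ℕ) = n - 1 then (1 : ℂ) else 0)
        = Matrix.of fun i j => M i j.rev := by
    intro M
    ext i j
    rw [Matrix.mul_apply]
    rw [Finset.sum_eq_single j.rev]
    · have h : (j.rev : ℕ) + (j : ℕ) = n - 1 := by
        have h1 := j.isLt
        have h2 := Fin.val_rev j
        omega
      simp only [Matrix.of_apply]
      rw [if_pos h, mul_one]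
    · intro k _ hk
      have h : ¬ ((k : ℕ) + (j : ℕ) = n - 1) := by
        intro h
        apply hk
        apply Fin.ext
        have h1 := j.isLt
        have h2 := k.isLt
        have h3 := Fin.val_rev j
        omega
      simp only [Matrix.of_apply]
      rw [if_neg h, mul_zero]
    · intro h
      exact absurd (Finset.mem_univ _) h
  -- key computation of a
  have key : ∀ (i j : Fin n), a ((j : ℤ) - (i : ℤ)) =
      ∑ s ∈ Finset.range (2 * n),
        if (i : ℕ) ≤ s ∧ (j : ℕ) ≤ s then u (s - (i : ℕ)) * l (s - (j : ℕ)) else 0 := by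
    intro i j
    rw [ha]
    set T := (Finset.range (2 * n)).filter (fun s => (i : ℕ) ≤ s ∧ (j : ℕ) ≤ s) with hT
    rw [tsum_eq_sum (s := T.image (fun s => (s - (i : ℕ), s - (j : ℕ))))]
    · rw [Finset.sum_image (by
        intro s hs t ht hst
        rw [hT, Finset.mem_coe, Finset.mem_filter] at hs ht
        have h1 := congrArg Prod.fst hst
        simp only at h1
        omega)]
      rw [hT, Finset.sum_filter]
      apply Finset.sum_congr rfl
      intro s _
      split_ifs with hp hc
      · rfl
      · exact absurd (by omega) hc
      · rfl
    · intro p hp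
      split_ifs with hc
      · by_contra h0
        apply hp
        have hp1 : p.1 < n := by
          by_contra h
          exact h0 (by rw [hu p.1 (le_of_not_gt h), zero_mul])
        have hp2 : p.2 < n := by
          by_contra h
          exact h0 (by rw [hl p.2 (le_of_not_gt h), mul_zero])
        have heq : p.1 + (i : ℕ) = p.2 + (j : ℕ) := by
          have h1 := i.isLt
          have h2 := j.isLt
          omega
        rw [Finset.mem_image]
        refine ⟨p.1 + (i : ℕ), ?_, ?_⟩
        · rw [hT, Finset.mem_filter, Finset.mem_range]
          have h1 := i.isLt
          have h2 := j.isLt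
          refine ⟨by omega, by omega, by omega⟩
        · have h1 : p.1 + (i : ℕ) - (i : ℕ) = p.1 := by omega
          have h2 : p.1 + (i : ℕ) - (j : ℕ) = p.2 := by omega
          rw [h1, h2]
      · rfl
  -- now prove the matrix identity entrywise
  rw [hJl, hJr]
  ext i j
  simp only [Matrix.add_apply, Matrix.mul_apply, Matrix.of_apply, Matrix.transpose_apply]
  rw [key i j]
  have hsplit : Finset.range (2 * n) = Finset.range n ∪ Finset.Ico n (2 * n) := by
    simp only [Finset.range_eq_Ico]
    exact (Finset.Ico_union_Ico_eq_Ico (by omega) (by omega)).symm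
  rw [hsplit, Finset.sum_union (by
    rw [Finset.range_eq_Ico]
    exact Finset.Ico_disjoint_Ico_consecutive 0 n (2 * n))]
  congr 1
  · rw [← Fin.sum_univ_eq_sum_range]
    apply Finset.sum_congr rfl
    intro k _
    by_cases h1 : (i : ℕ) ≤ (k : ℕ) <;> by_cases h2 : (j : ℕ) ≤ (k : ℕ) <;>
      simp [h1, h2]
  · rw [show Finset.Ico n (2 * n) = (Finset.range n).map
        ⟨fun s => n + s, add_right_injective n⟩ by
      ext x
      simp only [Finset.mem_map, Function.Embedding.coeFn_mk, Finset.mem_Ico, Finset.mem_range]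
      constructor
      · rintro ⟨h1, h2⟩
        exact ⟨x - n, by omega, by omega⟩
      · rintro ⟨y, hy, rfl⟩
        omega]
    rw [Finset.sum_map, ← Fin.sum_univ_eq_sum_range]
    apply Finset.sum_congr rfl
    intro k _
    simp only [Function.Embedding.coeFn_mk]
    have h1 := i.isLt
    have h2 := j.isLt
    have h3 := Fin.val_rev i
    have h4 := Fin.val_rev j
    have hc : (i : ℕ) ≤ n + (k : ℕ) ∧ (j : ℕ) ≤ n + (k : ℕ) := ⟨by omega, by omega⟩
    rw [if_pos hc]
    have e1 : (i.rev : ℕ) + (k : ℕ) + 1 = n + (k : ℕ) - (i : ℕ) := by omega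
    have e2 : (k : ℕ) + (j.rev : ℕ) + 1 = n + (k : ℕ) - (j : ℕ) := by omega
    rw [e1, e2]
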